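/- arXiv:2306.15021 — 5 statements merged into one kernel-verified Lean document; each statement's English description precedes it below -/
import Mathlib

section
/- Let H be a complex Hilbert space and let R = (R_1,…,R_d) be a commuting d-tuple of bounded linear operators on H. Then for all m, n ∈ ℕ₀ the two defining expressions for Λ_{m,n}(R) agree: Σ_{k=0}^{n} (−1)^{n−k} C(n,k) (R_1*+⋯+R_d*)^k M_m(R) (R_1+⋯+R_d)^{n−k} = Σ_{j=0}^{m} (−1)^{m−j} C(m,j) Σ_{|γ|=j} (j!/γ!) R*^γ S_n(R) R^γ. -/
open Finset ContinuousLinearMap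
open scoped InnerProductSpace

variable {H : Type*} [NormedAddCommGroup H] [InnerProductSpace ℂ H] [CompleteSpace H]

/-- `R^γ = R_1^{γ_1} ⋯ R_d^{γ_d}` for a multi-index `γ`. -/
noncomputable def opPow {d : ℕ} (R : Fin d → H →L[ℂ] H) (γ : Fin d → ℕ) : H →L[ℂ] H :=
  (List.ofFn fun i => (R i) ^ (γ i)).prod

/-- `M_m(R) = Σ_{k=0}^{m} (−1)^{m−k} C(m,k) Σ_{|γ|=k} (k!/γ!) R*^γ R^γ`. -/
noncomputable def Mop {d : ℕ} (R : Fin d → H →L[ℂ] H) (m : ℕ) : H →L[ℂ] H :=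
  ∑ k ∈ Finset.range (m + 1), ((-1 : ℂ) ^ (m - k) * (m.choose k : ℂ)) •
    ∑ γ ∈ Finset.Nat.antidiagonalTuple d k,
      ((Nat.multinomial Finset.univ γ : ℕ) : ℂ) •
        (opPow (fun i => ContinuousLinearMap.adjoint (R i)) γ * opPow R γ)

/-- `S_n(R) = Σ_{k=0}^{n} (−1)^{n−k} C(n,k) (R_1*+⋯+R_d*)^k (R_1+⋯+R_d)^{n−k}`. -/
noncomputable def Sop {d : ℕ} (R : Fin d → H →L[ℂ] H) (n : ℕ) : H →L[ℂ] H :=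
  ∑ k ∈ Finset.range (n + 1), ((-1 : ℂ) ^ (n - k) * (n.choose k : ℂ)) •
    ((∑ i, ContinuousLinearMap.adjoint (R i)) ^ k * (∑ i, R i) ^ (n - k))

/-- `Λ_{m,n}(R) = Σ_{k=0}^{n} (−1)^{n−k} C(n,k) (R_1*+⋯+R_d*)^k M_m(R) (R_1+⋯+R_d)^{n−k}`. -/
noncomputable def Lam {d : ℕ} (R : Fin d → H →L[ℂ] H) (m n : ℕ) : H →L[ℂ] H :=
  ∑ k ∈ Finset.range (n + 1), ((-1 : ℂ) ^ (n - k) * (n.choose k : ℂ)) •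
    ((∑ i, ContinuousLinearMap.adjoint (R i)) ^ k * Mop R m * (∑ i, R i) ^ (n - k))


lemma commute_opPow_sum_pow {d : ℕ} (R : Fin d → H →L[ℂ] H)
    (h : ∀ i j, Commute (R i) (R j)) (γ : Fin d → ℕ) (p : ℕ) :
    Commute (opPow R γ) ((∑ i, R i) ^ p) := by
  apply Commute.pow_right
  apply Commute.list_prod_left
  intro a ha
  rw [List.mem_ofFn] at ha
  obtain ⟨i, rfl⟩ := ha
  exact (Commute.sum_right _ _ _ fun j _ => h i j).pow_left _

lemma adjoint_commute {d : ℕ} (R : Fin d → H →L[ℂ] H)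
    (h : ∀ i j, Commute (R i) (R j)) :
    ∀ i j, Commute (ContinuousLinearMap.adjoint (R i)) (ContinuousLinearMap.adjoint (R j)) := by
  intro i j
  have := congrArg ContinuousLinearMap.adjoint (h i j).eq
  simp only [show ∀ A B : H →L[ℂ] H, A * B = A ∘L B from fun _ _ => rfl,
    ContinuousLinearMap.adjoint_comp] at this
  exact this.symm

/-- the two defining expressions for `Λ_{m,n}(R)` agree. -/
theorem lam_eq_second_form {d : ℕ} (R : Fin d → H →L[ℂ] H)
    (hcomm : ∀ i j, Commute (R i) (R j)) (m n : ℕ) :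
    Lam R m n =
      ∑ j ∈ Finset.range (m + 1), ((-1 : ℂ) ^ (m - j) * (m.choose j : ℂ)) •
        ∑ γ ∈ Finset.Nat.antidiagonalTuple d j,
          ((Nat.multinomial Finset.univ γ : ℕ) : ℂ) •
            (opPow (fun i => ContinuousLinearMap.adjoint (R i)) γ * Sop R n * opPow R γ) := by
  unfold Lam Mop Sop
  simp only [Finset.mul_sum, Finset.sum_mul, Finset.smul_sum, smul_mul_assoc, mul_smul_comm]
  rw [Finset.sum_comm]
  refine Finset.sum_congr rfl fun j _ => ?_
  rw [Finset.sum_comm]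
  refine Finset.sum_congr rfl fun γ _ => Finset.sum_congr rfl fun k _ => ?_
  rw [smul_comm, smul_comm ((-1 : ℂ) ^ (n - k) * _)]
  congr 3
  calc (∑ i, adjoint (R i)) ^ k *
        (opPow (fun i => adjoint (R i)) γ * opPow R γ) * (∑ i, R i) ^ (n - k)
      = ((∑ i, adjoint (R i)) ^ k * opPow (fun i => adjoint (R i)) γ) *
        (opPow R γ * (∑ i, R i) ^ (n - k)) := by simp only [mul_assoc]
    _ = (opPow (fun i => adjoint (R i)) γ * (∑ i, adjoint (R i)) ^ k) *
        ((∑ i, R i) ^ (n - k) * opPow R γ) := by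
        rw [(commute_opPow_sum_pow _ (adjoint_commute R hcomm) γ k).eq,
          (commute_opPow_sum_pow R hcomm γ (n - k)).eq]
    _ = opPow (fun i => adjoint (R i)) γ *
        ((∑ i, adjoint (R i)) ^ k * (∑ i, R i) ^ (n - k)) * opPow R γ := by
        simp only [mul_assoc]
end

section
/- Let H be a complex Hilbert space, let R ∈ B(H) be a single operator that is (m,n)-isosymmetric, i.e. Σ_{k=0}^{n} (−1)^{n−k} C(n,k) (R*)^k ( Σ_{j=0}^{m} (−1)^{m−j} C(m,j) (R*)^j R^j ) R^{n−k} = 0, and let β = (β_1,…,β_d) ∈ ℝ^d with β_1² + ⋯ + β_d² = 1. Then the commuting d-tuple (β_1 R, β_2 R, …, β_d R) is an (m,n)-isosymmetric multioperator, i.e. Λ_{m,n}(β_1 R,…,β_d R) = 0. -/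
open Finset ContinuousLinearMap
open scoped InnerProductSpace

variable {H : Type*} [NormedAddCommGroup H] [InnerProductSpace ℂ H] [CompleteSpace H]

lemma opPow_smul {d : ℕ} (c : Fin d → ℂ) (R : H →L[ℂ] H) (γ : Fin d → ℕ) :
    opPow (fun i => c i • R) γ = (∏ i, c i ^ γ i) • R ^ (∑ i, γ i) := by
  induction d with
  | zero => simp [opPow]
  | succ d ih =>
    rw [opPow, List.ofFn_succ, List.prod_cons]
    have htail : (List.ofFn fun i : Fin d => (c i.succ • R) ^ γ i.succ).prod
        = opPow (fun i => (c ∘ Fin.succ) i • R) (γ ∘ Fin.succ) := rfl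
    rw [htail, ih, smul_pow, smul_mul_smul_comm, ← pow_add, Fin.prod_univ_succ,
      Fin.sum_univ_succ]
    rfl

lemma Mop_smul {d : ℕ} (R : H →L[ℂ] H) (m : ℕ) (β : Fin d → ℝ)
    (hβ : ∑ i, (β i) ^ 2 = 1) :
    Mop (fun i => (β i : ℂ) • R) m
      = ∑ k ∈ Finset.range (m + 1), ((-1 : ℂ) ^ (m - k) * (m.choose k : ℂ)) •
          ((ContinuousLinearMap.adjoint R) ^ k * R ^ k) := by
  unfold Mop
  refine Finset.sum_congr rfl fun k _ => ?_
  congr 1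
  have hadj : (fun i : Fin d => ContinuousLinearMap.adjoint ((β i : ℂ) • R))
      = fun i : Fin d => (β i : ℂ) • ContinuousLinearMap.adjoint R := by
    funext i
    rw [map_smulₛₗ]
    simp
  rw [hadj]
  have key : ∀ γ ∈ Finset.Nat.antidiagonalTuple d k,
      ((Nat.multinomial Finset.univ γ : ℕ) : ℂ) •
        (opPow (fun i => (β i : ℂ) • ContinuousLinearMap.adjoint R) γ *
          opPow (fun i => (β i : ℂ) • R) γ)
      = ((Nat.multinomial Finset.univ γ : ℂ) * ∏ i, ((β i : ℂ) ^ 2) ^ γ i) •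
          ((ContinuousLinearMap.adjoint R) ^ k * R ^ k) := by
    intro γ hγ
    have hsum : ∑ i, γ i = k := Finset.Nat.mem_antidiagonalTuple.mp hγ
    rw [opPow_smul, opPow_smul, hsum, smul_mul_smul_comm, smul_smul]
    congr 1
    rw [← Finset.prod_mul_distrib]
    congr 1
    exact Finset.prod_congr rfl fun i _ => by rw [← pow_add, ← pow_mul, two_mul]
  rw [Finset.sum_congr rfl key, ← Finset.sum_smul]
  have hmulti : ∑ γ ∈ Finset.Nat.antidiagonalTuple d k,
      ((Nat.multinomial Finset.univ γ : ℂ) * ∏ i, ((β i : ℂ) ^ 2) ^ γ i)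
      = (∑ i, (β i : ℂ) ^ 2) ^ k := by
    rw [← Finset.piAntidiag_univ_fin_eq_antidiagonalTuple k d,
      Finset.sum_pow_eq_sum_piAntidiag]
  have : (∑ i, (β i : ℂ) ^ 2) = 1 := by
    have : ((∑ i, (β i) ^ 2 : ℝ) : ℂ) = 1 := by rw [hβ]; norm_num
    push_cast at this
    exact this
  rw [hmulti, this, one_pow, one_smul]

/-- if `R` is an `(m,n)`-isosymmetric single operator and `β ∈ ℝ^d` is a unit vector,
then the tuple `(β_1 R, …, β_d R)` is an `(m,n)`-isosymmetric multioperator. -/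
theorem isosymmetric_tuple_of_single {d : ℕ} (R : H →L[ℂ] H) (m n : ℕ)
    (hR : ∑ k ∈ Finset.range (n + 1), ((-1 : ℂ) ^ (n - k) * (n.choose k : ℂ)) •
        ((ContinuousLinearMap.adjoint R) ^ k *
          (∑ j ∈ Finset.range (m + 1), ((-1 : ℂ) ^ (m - j) * (m.choose j : ℂ)) •
            ((ContinuousLinearMap.adjoint R) ^ j * R ^ j)) * R ^ (n - k)) = 0)
    (β : Fin d → ℝ) (hβ : ∑ i, (β i) ^ 2 = 1) :
    Lam (fun i => (β i : ℂ) • R) m n = 0 := by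
  unfold Lam
  rw [Mop_smul R m β hβ]
  set s : ℂ := ∑ i, (β i : ℂ) with hs
  have h1 : (∑ i : Fin d, ((β i : ℂ) • R)) = s • R := by
    rw [hs, Finset.sum_smul]
  have h2 : (∑ i : Fin d, ContinuousLinearMap.adjoint ((β i : ℂ) • R))
      = s • ContinuousLinearMap.adjoint R := by
    rw [hs, Finset.sum_smul]
    refine Finset.sum_congr rfl fun i _ => ?_
    rw [map_smulₛₗ]
    simp
  rw [h1, h2]
  have key : ∀ k ∈ Finset.range (n + 1),
      ((-1 : ℂ) ^ (n - k) * (n.choose k : ℂ)) •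
        ((s • ContinuousLinearMap.adjoint R) ^ k *
          (∑ j ∈ Finset.range (m + 1), ((-1 : ℂ) ^ (m - j) * (m.choose j : ℂ)) •
            ((ContinuousLinearMap.adjoint R) ^ j * R ^ j)) * (s • R) ^ (n - k))
      = s ^ n • (((-1 : ℂ) ^ (n - k) * (n.choose k : ℂ)) •
          ((ContinuousLinearMap.adjoint R) ^ k *
            (∑ j ∈ Finset.range (m + 1), ((-1 : ℂ) ^ (m - j) * (m.choose j : ℂ)) •
              ((ContinuousLinearMap.adjoint R) ^ j * R ^ j)) * R ^ (n - k))) := by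
    intro k hk
    have hk' : k ≤ n := Nat.lt_succ_iff.mp (Finset.mem_range.mp hk)
    rw [smul_pow, smul_pow, smul_mul_assoc, smul_mul_smul_comm, ← pow_add,
      Nat.add_sub_cancel' hk', smul_comm]
  rw [Finset.sum_congr rfl key, ← Finset.smul_sum, hR, smul_zero]
end

section
/- Let H be a complex Hilbert space and let R = (R_1,…,R_d) be a commuting d-tuple of bounded linear operators on H. Then for all m, n ∈ ℕ₀: Λ_{m+1,n}(R) = Σ_{j=1}^{d} R_j* Λ_{m,n}(R) R_j − Λ_{m,n}(R). -/
open Finset ContinuousLinearMap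
open scoped InnerProductSpace

variable {H : Type*} [NormedAddCommGroup H] [InnerProductSpace ℂ H] [CompleteSpace H]

/-! ### Auxiliary lemmas about `opPow` -/

lemma opPow_zero {d : ℕ} (S : Fin d → H →L[ℂ] H) : opPow S (fun _ => 0) = 1 := by
  simp [opPow]

lemma opPow_succ {d : ℕ} (S : Fin (d + 1) → H →L[ℂ] H) (γ : Fin (d + 1) → ℕ) :
    opPow S γ = S 0 ^ γ 0 * opPow (fun i => S i.succ) (fun i => γ i.succ) := by
  simp [opPow, List.ofFn_succ]

lemma commute_opPow {d : ℕ} (S : Fin d → H →L[ℂ] H) (x : H →L[ℂ] H)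
    (hx : ∀ i, Commute x (S i)) (γ : Fin d → ℕ) : Commute x (opPow S γ) := by
  apply Commute.list_prod_right
  intro y hy
  obtain ⟨i, hi⟩ := List.mem_ofFn.mp hy
  exact hi ▸ (hx i).pow_right _

lemma opPow_add {d : ℕ} (S : Fin d → H →L[ℂ] H) (hS : ∀ i j, Commute (S i) (S j))
    (γ δ : Fin d → ℕ) : opPow S (γ + δ) = opPow S γ * opPow S δ := by
  induction d with
  | zero => simp [opPow]
  | succ d ih =>
    rw [opPow_succ, opPow_succ S γ, opPow_succ S δ]
    have hc : Commute (opPow (fun i => S i.succ) (fun i => γ i.succ)) (S 0 ^ δ 0) :=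
      ((commute_opPow _ (S 0) (fun i => hS 0 i.succ) _).pow_left _).symm
    have : (fun i : Fin d => (γ + δ) i.succ)
        = (fun i => γ i.succ) + (fun i => δ i.succ) := rfl
    rw [Pi.add_apply, this, ih (fun i => S i.succ) (fun i j => hS i.succ j.succ),
      pow_add, hc.mul_mul_mul_comm]

lemma opPow_single {d : ℕ} (S : Fin d → H →L[ℂ] H) (j : Fin d) :
    opPow S (Pi.single j 1) = S j := by
  induction d with
  | zero => exact j.elim0
  | succ d ih =>
    rw [opPow_succ]
    refine Fin.cases ?_ (fun j' => ?_) j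
    · have : (fun i : Fin d => (Pi.single (0 : Fin (d + 1)) 1 : Fin (d + 1) → ℕ) i.succ)
          = (fun _ => 0 : Fin d → ℕ) := by
        funext i
        simp [Pi.single_apply, Fin.succ_ne_zero]
      rw [this, opPow_zero, Pi.single_eq_same, pow_one, mul_one]
    · have h1 : (Pi.single (Fin.succ j') 1 : Fin (d + 1) → ℕ) 0 = 0 := by
        simp [Pi.single_apply, (Fin.succ_ne_zero j').symm]
      have h2 : (fun i : Fin d => (Pi.single (Fin.succ j') 1 : Fin (d + 1) → ℕ) i.succ)
          = Pi.single j' 1 := by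
        funext i
        simp [Pi.single_apply, Fin.succ_inj]
      rw [h1, h2, pow_zero, one_mul, ih]

/-! ### The linear map `E` from polynomials to operators -/

/-- Linear extension of `γ ↦ F γ` from monomials to all of `MvPolynomial`. -/
noncomputable def Emap {M : Type*} [AddCommGroup M] [Module ℂ M] {d : ℕ}
    (F : (Fin d → ℕ) → M) : MvPolynomial (Fin d) ℂ →ₗ[ℂ] M :=
  (Finsupp.lsum ℂ fun γ : Fin d →₀ ℕ => LinearMap.toSpanSingleton ℂ M (F ⇑γ)) ∘ₗ
    (AddMonoidAlgebra.coeffLinearEquiv ℂ).toLinearMap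

lemma Emap_monomial {M : Type*} [AddCommGroup M] [Module ℂ M] {d : ℕ}
    (F : (Fin d → ℕ) → M) (γ : Fin d →₀ ℕ) (c : ℂ) :
    Emap F (MvPolynomial.monomial γ c) = c • F ⇑γ := by
  rw [← MvPolynomial.single_eq_monomial]
  show Finsupp.lsum ℂ _ (Finsupp.single γ c) = _
  rw [Finsupp.lsum_single, LinearMap.toSpanSingleton_apply]

section Main

variable {d : ℕ}

/-- abbreviation for the adjoint tuple -/
noncomputable def Atup (R : Fin d → H →L[ℂ] H) : Fin d → H →L[ℂ] H :=
  fun i => ContinuousLinearMap.adjoint (R i)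

/-- the basic operator family -/
noncomputable def Fop (R : Fin d → H →L[ℂ] H) : (Fin d → ℕ) → (H →L[ℂ] H) :=
  fun γ => opPow (Atup R) γ * opPow R γ

lemma Acomm (R : Fin d → H →L[ℂ] H) (hcomm : ∀ i j, Commute (R i) (R j)) :
    ∀ i j, Commute (Atup R i) (Atup R j) := by
  intro i j
  have h := (hcomm j i).eq
  have : ContinuousLinearMap.adjoint (R j * R i) = ContinuousLinearMap.adjoint (R i * R j) := by
    rw [h]
  calc Atup R i * Atup R j
      = ContinuousLinearMap.adjoint (R j * R i) :=
        (ContinuousLinearMap.adjoint_comp (R j) (R i)).symm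
    _ = ContinuousLinearMap.adjoint (R i * R j) := this
    _ = Atup R j * Atup R i := ContinuousLinearMap.adjoint_comp (R i) (R j)

lemma Emap_X_mul (R : Fin d → H →L[ℂ] H) (hcomm : ∀ i j, Commute (R i) (R j))
    (j : Fin d) (p : MvPolynomial (Fin d) ℂ) :
    Emap (Fop R) (MvPolynomial.X j * p)
      = Atup R j * Emap (Fop R) p * R j := by
  induction p using MvPolynomial.induction_on' with
  | monomial γ c =>
    rw [MvPolynomial.X, MvPolynomial.monomial_mul, one_mul, Emap_monomial, Emap_monomial]
    have hco : ((Finsupp.single j 1 + γ : Fin d →₀ ℕ) : Fin d → ℕ) = Pi.single j 1 + ⇑γ := by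
      funext i
      simp [Finsupp.single_eq_pi_single]
    have hA : opPow (Atup R) (Pi.single j 1 + ⇑γ)
        = Atup R j * opPow (Atup R) ⇑γ := by
      rw [opPow_add _ (Acomm R hcomm), opPow_single]
    have hR : opPow R (Pi.single j 1 + ⇑γ) = opPow R ⇑γ * R j := by
      rw [opPow_add _ hcomm, opPow_single,
        (commute_opPow R (R j) (fun i => hcomm j i) ⇑γ).eq]
    rw [Fop, Fop, hco, hA, hR]
    simp only [mul_smul_comm, smul_mul_assoc, mul_assoc]
  | add p q hp hq =>
    rw [mul_add, map_add, map_add, hp, hq, mul_add, add_mul]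

lemma Emap_sumX_mul (R : Fin d → H →L[ℂ] H) (hcomm : ∀ i j, Commute (R i) (R j))
    (p : MvPolynomial (Fin d) ℂ) :
    Emap (Fop R) ((∑ j, MvPolynomial.X j) * p)
      = ∑ j, Atup R j * Emap (Fop R) p * R j := by
  rw [Finset.sum_mul, map_sum]
  exact Finset.sum_congr rfl fun j _ => Emap_X_mul R hcomm j p

lemma Emap_sumX_pow (R : Fin d → H →L[ℂ] H) (k : ℕ) :
    Emap (Fop R) ((∑ j, MvPolynomial.X j) ^ k)
      = ∑ γ ∈ Finset.Nat.antidiagonalTuple d k,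
          ((Nat.multinomial Finset.univ γ : ℕ) : ℂ) • Fop R γ := by
  rw [Finset.sum_pow_eq_sum_piAntidiag, Finset.piAntidiag_univ_fin_eq_antidiagonalTuple, map_sum]
  refine Finset.sum_congr rfl fun γ _ => ?_
  have hmono : ((Nat.multinomial Finset.univ γ : ℕ) : MvPolynomial (Fin d) ℂ)
        * ∏ i, MvPolynomial.X i ^ γ i
      = MvPolynomial.monomial (Finsupp.equivFunOnFinite.symm γ)
          ((Nat.multinomial Finset.univ γ : ℕ) : ℂ) := by
    rw [MvPolynomial.monomial_eq, Finsupp.prod_pow]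
    simp [Finsupp.equivFunOnFinite]
    exact Or.inl rfl
  rw [hmono, Emap_monomial]
  have hγ : (⇑(Finsupp.equivFunOnFinite.symm γ) : Fin d → ℕ) = γ :=
    Finsupp.equivFunOnFinite.apply_symm_apply γ
  rw [hγ]

lemma sub_one_pow_eq (m : ℕ) :
    ((∑ j, MvPolynomial.X j : MvPolynomial (Fin d) ℂ) - 1) ^ m
      = ∑ k ∈ Finset.range (m + 1), ((-1 : ℂ) ^ (m - k) * (m.choose k : ℂ)) •
          (∑ j, MvPolynomial.X j) ^ k := by
  rw [sub_pow]
  refine Finset.sum_congr rfl fun k hk => ?_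
  rw [Finset.mem_range] at hk
  have hpow : ((-1 : MvPolynomial (Fin d) ℂ)) ^ (k + m) = (-1) ^ (m - k) := by
    rw [show k + m = (m - k) + 2 * k by omega, pow_add, pow_mul]
    simp
  rw [hpow, MvPolynomial.smul_eq_C_mul, one_pow, map_mul,
    map_natCast (MvPolynomial.C : ℂ →+* MvPolynomial (Fin d) ℂ), map_pow, map_neg, map_one]
  ring

lemma Mop_eq_Emap (R : Fin d → H →L[ℂ] H) (m : ℕ) :
    Mop R m = Emap (Fop R) (((∑ j, MvPolynomial.X j) - 1) ^ m) := by
  rw [sub_one_pow_eq, map_sum]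
  refine Finset.sum_congr rfl fun k _ => ?_
  rw [map_smul, Emap_sumX_pow]
  rfl

lemma Mop_succ (R : Fin d → H →L[ℂ] H) (hcomm : ∀ i j, Commute (R i) (R j)) (m : ℕ) :
    Mop R (m + 1) = (∑ j, Atup R j * Mop R m * R j) - Mop R m := by
  rw [Mop_eq_Emap R, Mop_eq_Emap R]
  have : ((∑ j, MvPolynomial.X j : MvPolynomial (Fin d) ℂ) - 1) ^ (m + 1)
      = (∑ j, MvPolynomial.X j) * ((∑ j, MvPolynomial.X j) - 1) ^ m
        - ((∑ j, MvPolynomial.X j) - 1) ^ m := by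
    ring
  rw [this, map_sub, Emap_sumX_mul R hcomm]

end Main

/-- `Λ_{m+1,n}(R) = Σ_j R_j* Λ_{m,n}(R) R_j − Λ_{m,n}(R)`. -/
theorem lam_succ_left {d : ℕ} (R : Fin d → H →L[ℂ] H)
    (hcomm : ∀ i j, Commute (R i) (R j)) (m n : ℕ) :
    Lam R (m + 1) n =
      (∑ j, ContinuousLinearMap.adjoint (R j) * Lam R m n * R j) - Lam R m n := by
  have hA := Acomm R hcomm
  have hsum : ∑ j, Atup R j * Mop R m * R j = Mop R (m + 1) + Mop R m := by
    rw [Mop_succ R hcomm]; abel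
  have hMB : ∀ (j : Fin d) (k : ℕ),
      Atup R j * (∑ i, Atup R i) ^ k = (∑ i, Atup R i) ^ k * Atup R j := fun j k =>
    ((Commute.sum_right _ _ _ fun i _ => hA j i).pow_right k).eq
  have hRS : ∀ (j : Fin d) (k : ℕ),
      (∑ i, R i) ^ k * R j = R j * (∑ i, R i) ^ k := fun j k =>
    ((Commute.sum_right _ _ _ fun i _ => hcomm j i).pow_right k).eq.symm
  have h1 : ∑ j, ContinuousLinearMap.adjoint (R j) * Lam R m n * R j
      = Lam R (m + 1) n + Lam R m n := by
    have step : ∀ j : Fin d, ContinuousLinearMap.adjoint (R j) * Lam R m n * R j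
        = ∑ k ∈ Finset.range (n + 1), ((-1 : ℂ) ^ (n - k) * (n.choose k : ℂ)) •
            ((∑ i, ContinuousLinearMap.adjoint (R i)) ^ k
              * (Atup R j * Mop R m * R j) * (∑ i, R i) ^ (n - k)) := by
      intro j
      rw [Lam, Finset.mul_sum, Finset.sum_mul]
      refine Finset.sum_congr rfl fun k _ => ?_
      rw [mul_smul_comm, smul_mul_assoc]
      congr 1
      show Atup R j * _ * R j = _
      calc Atup R j * ((∑ i, Atup R i) ^ k * Mop R m * (∑ i, R i) ^ (n - k)) * R j
          = (Atup R j * (∑ i, Atup R i) ^ k) * Mop R m * ((∑ i, R i) ^ (n - k) * R j) := by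
            simp only [mul_assoc]
        _ = ((∑ i, Atup R i) ^ k * Atup R j) * Mop R m * (R j * (∑ i, R i) ^ (n - k)) := by
            rw [hMB, hRS]
        _ = (∑ i, Atup R i) ^ k * (Atup R j * Mop R m * R j) * (∑ i, R i) ^ (n - k) := by
            simp only [mul_assoc]
    calc ∑ j, ContinuousLinearMap.adjoint (R j) * Lam R m n * R j
        = ∑ k ∈ Finset.range (n + 1), ((-1 : ℂ) ^ (n - k) * (n.choose k : ℂ)) •
            ((∑ i, Atup R i) ^ k * (∑ j, Atup R j * Mop R m * R j) * (∑ i, R i) ^ (n - k)) := by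
          rw [Finset.sum_congr rfl fun j _ => step j, Finset.sum_comm]
          refine Finset.sum_congr rfl fun k _ => ?_
          rw [← Finset.smul_sum]
          congr 1
          rw [Finset.mul_sum, Finset.sum_mul]
          simp only [Atup]
      _ = Lam R (m + 1) n + Lam R m n := by
          rw [hsum]
          simp only [Lam, ← Finset.sum_add_distrib]
          refine Finset.sum_congr rfl fun k _ => ?_
          rw [← smul_add]
          congr 1
          rw [mul_add, add_mul]
          rfl
  rw [h1]
  abel
end

section
/- Let H be a complex Hilbert space and let R = (R_1,…,R_d) be a commuting d-tuple of bounded linear operators on H that is (m,n)-isosymmetric (Λ_{m,n}(R) = 0), with m, n positive integers. If μ = (μ_1,…,μ_d) ∈ ℂ^d is a joint eigenvalue of R, i.e. there exists a nonzero vector u ∈ H with R_l u = μ_l u for every l = 1,…,d, then either Σ_{l=1}^{d} |μ_l|² = 1 or μ_1 + ⋯ + μ_d is real (its imaginary part is zero). -/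
open Finset ContinuousLinearMap
open scoped InnerProductSpace

variable {H : Type*} [NormedAddCommGroup H] [InnerProductSpace ℂ H] [CompleteSpace H]

lemma pow_apply_eig (A : H →L[ℂ] H) (c : ℂ) (u : H) (h : A u = c • u) (k : ℕ) :
    (A ^ k) u = c ^ k • u := by
  induction k with
  | zero => simp
  | succ k ih =>
    rw [pow_succ, ContinuousLinearMap.mul_apply, h, map_smul, ih, smul_smul, pow_succ]
    ring_nf

lemma inner_pow_adjoint (A : H →L[ℂ] H) (c : ℂ) (u w : H) (h : A u = c • u) (k : ℕ) :
    ⟪u, ((ContinuousLinearMap.adjoint A) ^ k) w⟫_ℂ = (starRingEnd ℂ) (c ^ k) * ⟪u, w⟫_ℂ := by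
  induction k with
  | zero => simp
  | succ k ih =>
    rw [pow_succ', ContinuousLinearMap.mul_apply, ContinuousLinearMap.adjoint_inner_right, h,
      inner_smul_left, ih, map_pow, map_pow, pow_succ']
    ring

lemma opPow_apply_eig : ∀ {d : ℕ} (R : Fin d → H →L[ℂ] H) (μ : Fin d → ℂ) (u : H),
    (∀ l, R l u = μ l • u) → ∀ γ : Fin d → ℕ,
    opPow R γ u = (∏ i, μ i ^ γ i) • u := by
  intro d
  induction d with
  | zero => intro R μ u _ γ; simp [opPow]
  | succ d ih =>
    intro R μ u heig γ
    have : opPow R γ = (R 0) ^ (γ 0) * opPow (fun i => R i.succ) (fun i => γ i.succ) := by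
      simp only [opPow, List.ofFn_succ, List.prod_cons]
    rw [this, ContinuousLinearMap.mul_apply,
      ih (fun i => R i.succ) (fun i => μ i.succ) u (fun i => heig i.succ), map_smul,
      pow_apply_eig (R 0) (μ 0) u (heig 0), smul_smul, Fin.prod_univ_succ]
    ring_nf

lemma inner_opPow_adjoint : ∀ {d : ℕ} (R : Fin d → H →L[ℂ] H) (μ : Fin d → ℂ) (u : H),
    (∀ l, R l u = μ l • u) → ∀ (γ : Fin d → ℕ) (w : H),
    ⟪u, opPow (fun i => ContinuousLinearMap.adjoint (R i)) γ w⟫_ℂ =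
      (starRingEnd ℂ) (∏ i, μ i ^ γ i) * ⟪u, w⟫_ℂ := by
  intro d
  induction d with
  | zero => intro R μ u _ γ w; simp [opPow]
  | succ d ih =>
    intro R μ u heig γ w
    have : opPow (fun i => ContinuousLinearMap.adjoint (R i)) γ =
        (ContinuousLinearMap.adjoint (R 0)) ^ (γ 0) *
          opPow (fun i => ContinuousLinearMap.adjoint (R i.succ)) (fun i => γ i.succ) := by
      simp only [opPow, List.ofFn_succ, List.prod_cons]
    rw [this, ContinuousLinearMap.mul_apply,
      inner_pow_adjoint (R 0) (μ 0) u _ (heig 0),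
      ih (fun i => R i.succ) (fun i => μ i.succ) u (fun i => heig i.succ),
      Fin.prod_univ_succ, map_mul]
    ring

/-- if `R` is `(m,n)`-isosymmetric and `μ` is a joint eigenvalue of `R`,
then `Σ |μ_l|² = 1` or `μ_1+⋯+μ_d` is real. -/
theorem joint_eigenvalue_alternative {d : ℕ} (R : Fin d → H →L[ℂ] H)
    (hcomm : ∀ i j, Commute (R i) (R j)) (m n : ℕ) (hm : 0 < m) (hn : 0 < n)
    (hiso : Lam R m n = 0) (μ : Fin d → ℂ)
    (u : H) (hu : u ≠ 0) (heig : ∀ l, R l u = μ l • u) :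
    (∑ l, ‖μ l‖ ^ 2) = 1 ∨ (∑ l, μ l).im = 0 := by
  classical
  set s : ℂ := ∑ l, μ l with hs
  set t : ℂ := ∑ l, (starRingEnd ℂ) (μ l) * μ l with ht
  have hbin : ∀ (x : ℂ) (N : ℕ),
      (∑ k ∈ Finset.range (N + 1), ((-1 : ℂ) ^ (N - k) * (N.choose k : ℂ)) * x ^ k)
        = (x - 1) ^ N := by
    intro x N
    rw [sub_eq_add_neg, add_pow]
    refine Finset.sum_congr rfl fun k hk => ?_
    rw [neg_pow]
    ring
  have key : ∀ γ : Fin d → ℕ,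
      ⟪u, opPow (fun i => ContinuousLinearMap.adjoint (R i)) γ (opPow R γ u)⟫_ℂ
        = (∏ i, ((starRingEnd ℂ) (μ i) * μ i) ^ γ i) * ⟪u, u⟫_ℂ := by
    intro γ
    rw [opPow_apply_eig R μ u heig γ, inner_opPow_adjoint R μ u heig γ _, inner_smul_right]
    have : (∏ i, ((starRingEnd ℂ) (μ i) * μ i) ^ γ i)
        = (starRingEnd ℂ) (∏ i, μ i ^ γ i) * (∏ i, μ i ^ γ i) := by
      rw [map_prod, ← Finset.prod_mul_distrib]
      simp only [map_pow, mul_pow]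
    rw [this]
    ring
  have hmulti : ∀ k : ℕ, (∑ γ ∈ Finset.Nat.antidiagonalTuple d k,
      ((Nat.multinomial Finset.univ γ : ℕ) : ℂ) *
        ∏ i, ((starRingEnd ℂ) (μ i) * μ i) ^ γ i) = t ^ k := by
    intro k
    rw [ht, Finset.sum_pow_eq_sum_piAntidiag,
      Finset.piAntidiag_univ_fin_eq_antidiagonalTuple]
  have hM : ⟪u, Mop R m u⟫_ℂ = (t - 1) ^ m * ⟪u, u⟫_ℂ := by
    rw [Mop]
    simp only [ContinuousLinearMap.sum_apply, ContinuousLinearMap.coe_smul', Pi.smul_apply,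
      ContinuousLinearMap.mul_apply, inner_sum, inner_smul_right]
    have step : ∀ k : ℕ, (∑ γ ∈ Finset.Nat.antidiagonalTuple d k,
        ((Nat.multinomial Finset.univ γ : ℕ) : ℂ) *
          ⟪u, opPow (fun i => ContinuousLinearMap.adjoint (R i)) γ (opPow R γ u)⟫_ℂ)
        = t ^ k * ⟪u, u⟫_ℂ := by
      intro k
      rw [← hmulti k, Finset.sum_mul]
      refine Finset.sum_congr rfl fun γ _ => ?_
      rw [key γ]
      ring
    calc (∑ k ∈ Finset.range (m + 1), ((-1 : ℂ) ^ (m - k) * (m.choose k : ℂ)) *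
            ∑ γ ∈ Finset.Nat.antidiagonalTuple d k,
              ((Nat.multinomial Finset.univ γ : ℕ) : ℂ) *
                ⟪u, opPow (fun i => ContinuousLinearMap.adjoint (R i)) γ (opPow R γ u)⟫_ℂ)
        = ∑ k ∈ Finset.range (m + 1),
            (((-1 : ℂ) ^ (m - k) * (m.choose k : ℂ)) * t ^ k) * ⟪u, u⟫_ℂ := by
          refine Finset.sum_congr rfl fun k _ => ?_
          rw [step k]
          ring
      _ = (t - 1) ^ m * ⟪u, u⟫_ℂ := by rw [← Finset.sum_mul, hbin t m]
  have hS : (∑ i, R i) u = s • u := by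
    rw [ContinuousLinearMap.sum_apply, hs]
    simp only [heig]
    rw [Finset.sum_smul]
  have hadj : (∑ i, ContinuousLinearMap.adjoint (R i))
      = ContinuousLinearMap.adjoint (∑ i, R i) := by
    rw [map_sum]
  have hLam : ⟪u, Lam R m n u⟫_ℂ
      = ((starRingEnd ℂ) s - s) ^ n * ((t - 1) ^ m * ⟪u, u⟫_ℂ) := by
    rw [Lam]
    simp only [ContinuousLinearMap.sum_apply, ContinuousLinearMap.coe_smul', Pi.smul_apply,
      ContinuousLinearMap.mul_apply, inner_sum, inner_smul_right]
    have term : ∀ k : ℕ,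
        ⟪u, ((∑ i, ContinuousLinearMap.adjoint (R i)) ^ k)
            (Mop R m (((∑ i, R i) ^ (n - k)) u))⟫_ℂ
          = (starRingEnd ℂ) s ^ k * (s ^ (n - k) * ((t - 1) ^ m * ⟪u, u⟫_ℂ)) := by
      intro k
      rw [hadj, inner_pow_adjoint (∑ i, R i) s u _ hS k,
        pow_apply_eig (∑ i, R i) s u hS (n - k), map_smul, inner_smul_right, hM, map_pow]
    have hbin2 : (∑ k ∈ Finset.range (n + 1), ((-1 : ℂ) ^ (n - k) * (n.choose k : ℂ)) *
        ((starRingEnd ℂ) s ^ k * s ^ (n - k))) = ((starRingEnd ℂ) s - s) ^ n := by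
      rw [sub_eq_add_neg, add_pow]
      refine Finset.sum_congr rfl fun k hk => ?_
      rw [neg_pow]
      ring
    calc (∑ k ∈ Finset.range (n + 1), ((-1 : ℂ) ^ (n - k) * (n.choose k : ℂ)) *
            ⟪u, ((∑ i, ContinuousLinearMap.adjoint (R i)) ^ k)
              (Mop R m (((∑ i, R i) ^ (n - k)) u))⟫_ℂ)
        = ∑ k ∈ Finset.range (n + 1), (((-1 : ℂ) ^ (n - k) * (n.choose k : ℂ)) *
            ((starRingEnd ℂ) s ^ k * s ^ (n - k))) * ((t - 1) ^ m * ⟪u, u⟫_ℂ) := by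
          refine Finset.sum_congr rfl fun k _ => ?_
          rw [term k]
          ring
      _ = ((starRingEnd ℂ) s - s) ^ n * ((t - 1) ^ m * ⟪u, u⟫_ℂ) := by
          rw [← Finset.sum_mul, hbin2]
  have hzero : ((starRingEnd ℂ) s - s) ^ n * ((t - 1) ^ m * ⟪u, u⟫_ℂ) = 0 := by
    rw [← hLam, hiso]
    simp
  have huu : ⟪u, u⟫_ℂ ≠ 0 := inner_self_ne_zero.mpr hu
  rcases mul_eq_zero.mp hzero with h1 | h2
  · right
    have : (starRingEnd ℂ) s - s = 0 := pow_eq_zero_iff hn.ne' |>.mp h1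
    have hconj : (starRingEnd ℂ) s = s := by linear_combination this
    have := Complex.conj_eq_iff_im.mp hconj
    simpa [hs] using this
  · left
    rcases mul_eq_zero.mp h2 with h3 | h4
    · have ht1 : t = 1 := by
        have : t - 1 = 0 := pow_eq_zero_iff hm.ne' |>.mp h3
        linear_combination this
      have htval : t = ((∑ l, ‖μ l‖ ^ 2 : ℝ) : ℂ) := by
        rw [ht]
        push_cast
        refine Finset.sum_congr rfl fun l _ => ?_
        rw [← Complex.normSq_eq_conj_mul_self, Complex.normSq_eq_norm_sq]
        push_cast
        ring
      rw [htval] at ht1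
      exact_mod_cast ht1
    · exact absurd h4 huu
end

section
/- Let H be a complex Hilbert space and let R = (R_1,…,R_d) be a commuting d-tuple of bounded linear operators on H that is (m,n)-isosymmetric (Λ_{m,n}(R) = 0), with m, n positive integers. Let μ = (μ_1,…,μ_d) and μ′ = (μ′_1,…,μ′_d) in ℂ^d satisfy Σ_{j=1}^{d} μ_j · conj(μ′_j) ≠ 1 and Σ_{j=1}^{d} (μ_j − conj(μ′_j)) ≠ 0. If u, v ∈ H satisfy R_j u = μ_j u and R_j v = μ′_j v for every j = 1,…,d, then ⟨u, v⟩ = 0. -/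
open Finset ContinuousLinearMap
open scoped InnerProductSpace

variable {H : Type*} [NormedAddCommGroup H] [InnerProductSpace ℂ H] [CompleteSpace H]

lemma pow_eigen (A : H →L[ℂ] H) (c : ℂ) (v : H) (h : A v = c • v) (k : ℕ) :
    (A ^ k) v = c ^ k • v := by
  induction k with
  | zero => simp
  | succ k ih =>
    rw [pow_succ, ContinuousLinearMap.mul_apply, h, map_smul, ih, smul_smul, pow_succ,
      mul_comm]

lemma opPow_eigen {d : ℕ} (R : Fin d → H →L[ℂ] H) (γ : Fin d → ℕ) (μ : Fin d → ℂ)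
    (v : H) (hv : ∀ j, R j v = μ j • v) :
    opPow R γ v = (∏ i, μ i ^ γ i) • v := by
  induction d with
  | zero => simp [opPow]
  | succ d ih =>
    have ht := ih (fun i => R i.succ) (fun i => γ i.succ) (fun i => μ i.succ)
      (fun j => hv j.succ)
    simp only [opPow] at ht ⊢
    rw [List.ofFn_succ, List.prod_cons, ContinuousLinearMap.mul_apply, ht, map_smul,
      pow_eigen _ _ _ (hv 0), smul_smul, Fin.prod_univ_succ, mul_comm]

lemma inner_opPow_adj {d : ℕ} (R : Fin d → H →L[ℂ] H) (γ : Fin d → ℕ) (μ : Fin d → ℂ)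
    (u : H) (hu : ∀ j, R j u = μ j • u) (x : H) :
    ⟪u, opPow (fun i => ContinuousLinearMap.adjoint (R i)) γ x⟫_ℂ
      = (starRingEnd ℂ) (∏ i, μ i ^ γ i) * ⟪u, x⟫_ℂ := by
  induction d generalizing x with
  | zero => simp [opPow]
  | succ d ih =>
    have hadj : ContinuousLinearMap.adjoint (R 0) ^ γ 0
        = ContinuousLinearMap.adjoint (R 0 ^ γ 0) := by
      rw [← ContinuousLinearMap.star_eq_adjoint, ← ContinuousLinearMap.star_eq_adjoint,
        star_pow]
    simp only [opPow] at ih ⊢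
    rw [List.ofFn_succ, List.prod_cons, ContinuousLinearMap.mul_apply, hadj,
      ContinuousLinearMap.adjoint_inner_right, pow_eigen _ _ _ (hu 0), inner_smul_left,
      ih (fun i => R i.succ) (fun i => γ i.succ) (fun i => μ i.succ) (fun j => hu j.succ),
      Fin.prod_univ_succ, map_mul, mul_assoc]

lemma inner_Mop {d : ℕ} (R : Fin d → H →L[ℂ] H) (m : ℕ) (μ μ' : Fin d → ℂ)
    (u v : H) (hu : ∀ j, R j u = μ j • u) (hv : ∀ j, R j v = μ' j • v) :
    ⟪u, Mop R m v⟫_ℂ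
      = ((∑ j, (starRingEnd ℂ) (μ j) * μ' j) - 1) ^ m * ⟪u, v⟫_ℂ := by
  have key : ∀ γ : Fin d → ℕ,
      ⟪u, (opPow (fun i => ContinuousLinearMap.adjoint (R i)) γ * opPow R γ) v⟫_ℂ
        = (∏ i, ((starRingEnd ℂ) (μ i) * μ' i) ^ γ i) * ⟪u, v⟫_ℂ := by
    intro γ
    rw [ContinuousLinearMap.mul_apply, opPow_eigen R γ μ' v hv, map_smul,
      inner_smul_right, inner_opPow_adj R γ μ u hu, map_prod]
    simp only [map_pow, mul_pow, Finset.prod_mul_distrib]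
    ring
  simp only [Mop, ContinuousLinearMap.sum_apply, ContinuousLinearMap.smul_apply,
    inner_sum, inner_smul_right, key]
  have hmulti : ∀ k : ℕ, ∑ γ ∈ Finset.Nat.antidiagonalTuple d k,
      ((Nat.multinomial Finset.univ γ : ℕ) : ℂ)
        * ((∏ i, ((starRingEnd ℂ) (μ i) * μ' i) ^ γ i) * ⟪u, v⟫_ℂ)
      = (∑ j, (starRingEnd ℂ) (μ j) * μ' j) ^ k * ⟪u, v⟫_ℂ := by
    intro k
    rw [Finset.sum_pow_eq_sum_piAntidiag Finset.univ
      (fun j => (starRingEnd ℂ) (μ j) * μ' j) k,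
      Finset.piAntidiag_univ_fin_eq_antidiagonalTuple k d, Finset.sum_mul]
    exact Finset.sum_congr rfl fun γ _ => by push_cast; ring
  simp only [hmulti]
  have := add_pow ((∑ j, (starRingEnd ℂ) (μ j) * μ' j)) (-1 : ℂ) m
  rw [sub_eq_add_neg, this, Finset.sum_mul]
  exact Finset.sum_congr rfl fun k _ => by ring

/-- orthogonality of joint eigenvectors of an `(m,n)`-isosymmetric
multioperator. -/
theorem eigenvectors_orthogonal {d : ℕ} (R : Fin d → H →L[ℂ] H)
    (hcomm : ∀ i j, Commute (R i) (R j)) (m n : ℕ) (hm : 0 < m) (hn : 0 < n)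
    (hiso : Lam R m n = 0) (μ μ' : Fin d → ℂ)
    (h1 : ∑ j, μ j * (starRingEnd ℂ) (μ' j) ≠ 1)
    (h2 : ∑ j, (μ j - (starRingEnd ℂ) (μ' j)) ≠ 0)
    (u v : H) (hu : ∀ j, R j u = μ j • u) (hv : ∀ j, R j v = μ' j • v) :
    (⟪u, v⟫_ℂ : ℂ) = 0 := by
  classical
  set a := ∑ j, (starRingEnd ℂ) (μ j) * μ' j with ha
  set s := ∑ j, μ j with hs
  set t := ∑ j, μ' j with ht
  have hsu : (∑ i, R i) u = s • u := by
    rw [ContinuousLinearMap.sum_apply]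
    simp only [hu]
    rw [← Finset.sum_smul]
  have htv : (∑ i, R i) v = t • v := by
    rw [ContinuousLinearMap.sum_apply]
    simp only [hv]
    rw [← Finset.sum_smul]
  have hadjsum : (∑ i, ContinuousLinearMap.adjoint (R i))
      = ContinuousLinearMap.adjoint (∑ i, R i) := by
    simp only [← ContinuousLinearMap.star_eq_adjoint, star_sum]
  have hterm : ∀ k l : ℕ,
      ⟪u, ((∑ i, ContinuousLinearMap.adjoint (R i)) ^ k * Mop R m * (∑ i, R i) ^ l) v⟫_ℂ
        = (starRingEnd ℂ) s ^ k * t ^ l * ((a - 1) ^ m * ⟪u, v⟫_ℂ) := by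
    intro k l
    have h1' : ((∑ i, ContinuousLinearMap.adjoint (R i)) ^ k * Mop R m * (∑ i, R i) ^ l) v
        = t ^ l • ((∑ i, ContinuousLinearMap.adjoint (R i)) ^ k) (Mop R m v) := by
      rw [ContinuousLinearMap.mul_apply, ContinuousLinearMap.mul_apply,
        pow_eigen _ _ _ htv, map_smul, map_smul]
    rw [h1', inner_smul_right, hadjsum, ← ContinuousLinearMap.star_eq_adjoint, ← star_pow,
      ContinuousLinearMap.star_eq_adjoint, ContinuousLinearMap.adjoint_inner_right,
      pow_eigen _ _ _ hsu, inner_smul_left, inner_Mop R m μ μ' u v hu hv, map_pow]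
    ring
  have hLam : ⟪u, Lam R m n v⟫_ℂ
      = ((starRingEnd ℂ) s - t) ^ n * ((a - 1) ^ m * ⟪u, v⟫_ℂ) := by
    simp only [Lam, ContinuousLinearMap.sum_apply, ContinuousLinearMap.smul_apply,
      inner_sum, inner_smul_right, hterm]
    rw [show (starRingEnd ℂ) s - t = (starRingEnd ℂ) s + (-t) by ring, add_pow,
      Finset.sum_mul]
    exact Finset.sum_congr rfl fun k _ => by rw [neg_pow]; ring
  rw [hiso] at hLam
  simp only [ContinuousLinearMap.zero_apply, inner_zero_right] at hLam
  have hA : ((starRingEnd ℂ) s - t) ≠ 0 := by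
    intro h
    apply h2
    have h' := congrArg (starRingEnd ℂ) h
    simp only [map_sub, Complex.conj_conj, map_zero] at h'
    calc ∑ j, (μ j - (starRingEnd ℂ) (μ' j)) = s - (starRingEnd ℂ) t := by
          rw [hs, ht, map_sum, Finset.sum_sub_distrib]
      _ = 0 := h'
  have hB : a - 1 ≠ 0 := by
    intro h
    apply h1
    have ha1 : a = 1 := sub_eq_zero.mp h
    have h' := congrArg (starRingEnd ℂ) ha1
    rw [ha, map_sum, map_one] at h'
    simpa [map_mul, Complex.conj_conj] using h'
  have hzero : ((starRingEnd ℂ) s - t) ^ n * ((a - 1) ^ m * ⟪u, v⟫_ℂ) = 0 := hLam.symm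
  rw [← mul_assoc] at hzero
  exact (mul_eq_zero.mp hzero).resolve_left
    (mul_ne_zero (pow_ne_zero _ hA) (pow_ne_zero _ hB))
end
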